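/- Fix a countably infinite type C of constants, and let tuples be either R-tuples (pairs (a,b) ∈ C × C) or S-tuples (elements a ∈ C). Let Q_2 be the Boolean query with Q_2[W] = 1 iff there exist a, b with R(a,b) ∈ W and S(a) ∈ W (the Boolean conjunctive query ∃x∃y (R(x,y) ∧ S(x))). Then there exists a finite instance D with D^ex ≠ ∅ such that CE and ρ are not aligned for (Q_2, D). Concretely, for D with R-tuples {(a,a),(a,b),(b,a)} and S-tuples {a, b} (a ≠ b), all endogenous except the S-tuple a, which is exogenous: CE(D,Q_2,R(a,a)) = 3/8 > 1/8 = CE(D,Q_2,R(b,a)) while ρ(D,Q_2,R(a,a)) ≤ ρ(D,Q_2,R(b,a)), so the scores are not aligned. -/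

import Mathlib

open Finset

attribute [local instance] Classical.propDecidable

noncomputable section

variable {α : Type*} [DecidableEq α]

/-- The causal-effect score (= Banzhaf power index):
`CE(D,Q,τ) = 2^{-(|Dᵉⁿ|-1)} · Σ_{S ⊆ Dᵉⁿ∖{τ}} (Q[S ∪ Dᵉˣ ∪ {τ}] − Q[S ∪ Dᵉˣ])`. -/
def ceScore (Q : Finset α → ℕ) (Den Dex : Finset α) (τ : α) : ℝ :=
  (∑ S ∈ (Den.erase τ).powerset,
      ((Q (S ∪ Dex ∪ {τ}) : ℝ) - (Q (S ∪ Dex) : ℝ))) / 2 ^ (Den.card - 1)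

/-- The Shapley value of an endogenous tuple. -/
def shapleyScore (Q : Finset α → ℕ) (Den Dex : Finset α) (τ : α) : ℝ :=
  ∑ S ∈ (Den.erase τ).powerset,
    (((S.card.factorial : ℝ) * ((Den.card - S.card - 1).factorial : ℝ)) /
        (Den.card.factorial : ℝ)) *
      ((Q (S ∪ Dex ∪ {τ}) : ℝ) - (Q (S ∪ Dex) : ℝ))

/-- Responsibility: `1/(1+m)` where `m` is the minimum cardinality of a contingency set
for `τ`, and `0` if `τ` has no contingency set. -/
def respScore (Q : Finset α → ℕ) (D Den : Finset α) (τ : α) : ℝ :=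
  if ∃ Γ ⊆ Den.erase τ, Q (D \ Γ) = 1 ∧ Q (D \ insert τ Γ) = 0 then
    1 / (1 + ((sInf {n : ℕ | ∃ Γ ⊆ Den.erase τ,
        Γ.card = n ∧ Q (D \ Γ) = 1 ∧ Q (D \ insert τ Γ) = 0} : ℕ) : ℝ))
  else 0

/-- Probability of the Boolean query `Q` under the uniform-1/2 tuple-independent
distribution on an instance with endogenous part `Een` and exogenous part `Eex`. -/
def probQ (Q : Finset α → ℕ) (Een Eex : Finset α) : ℝ :=
  ((Een.powerset.filter (fun S => Q (S ∪ Eex) = 1)).card : ℝ) / 2 ^ Een.card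

/-- Two scores are aligned on the endogenous tuples. -/
def scoresAligned (sc1 sc2 : α → ℝ) (Den : Finset α) : Prop :=
  ∀ τ ∈ Den, ∀ τ' ∈ Den, (sc1 τ ≤ sc1 τ' ↔ sc2 τ ≤ sc2 τ')


variable (C : Type) [DecidableEq C]

/-- The Boolean conjunctive query `∃x∃y (R(x,y) ∧ S(x))`: R-tuples are pairs (left),
S-tuples are constants (right). -/
def Q2 : Finset ((C × C) ⊕ C) → ℕ :=
  fun W => if ∃ a b : C, Sum.inl (a, b) ∈ W ∧ Sum.inr a ∈ W then 1 else 0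

/-- The instance `D₂` : R-tuples `{(a,a),(a,b),(b,a)}` and S-tuples `{a,b}`. -/
def D6 (a b : C) : Finset ((C × C) ⊕ C) :=
  {Sum.inl (a, a), Sum.inl (a, b), Sum.inl (b, a), Sum.inr a, Sum.inr b}

/-- The exogenous part: the S-tuple `a`. -/
def Dex6 (a : C) : Finset ((C × C) ⊕ C) := {Sum.inr a}

/-- The endogenous part. -/
def Den6 (a b : C) : Finset ((C × C) ⊕ C) := D6 C a b \ Dex6 C a

variable {C}

lemma aux_ps1 (z : (C × C) ⊕ C) (g : Finset ((C × C) ⊕ C) → ℝ) :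
    ∑ t ∈ ({z} : Finset _).powerset, g t = g ∅ + g {z} := by
  rw [show ({z}:Finset _) = insert z ∅ from rfl, Finset.sum_powerset_insert (by simp)]
  simp

lemma aux_ps2 {y z : (C × C) ⊕ C} (hyz : y ≠ z) (g : Finset ((C × C) ⊕ C) → ℝ) :
    ∑ t ∈ ({y,z} : Finset _).powerset, g t = g ∅ + g {z} + (g {y} + g {y,z}) := by
  rw [show ({y,z}:Finset _) = insert y {z} from rfl,
      Finset.sum_powerset_insert (by simp [hyz]), aux_ps1, aux_ps1]
  simp

lemma aux_ps3 {x y z : (C × C) ⊕ C} (hxy : x≠y) (hxz : x≠z) (hyz : y≠z)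
    (g : Finset ((C × C) ⊕ C) → ℝ) :
    ∑ t ∈ ({x,y,z} : Finset _).powerset, g t =
      g ∅ + g {z} + (g {y} + g {y,z}) + (g {x} + g {x,z} + (g {x,y} + g {x,y,z})) := by
  rw [show ({x,y,z}:Finset _) = insert x {y,z} from rfl,
      Finset.sum_powerset_insert (by simp [hxy,hxz]), aux_ps2 hyz, aux_ps2 hyz]
  simp

lemma aux_den6 (a b : C) (hab : a ≠ b) :
    Den6 C a b = {Sum.inl (a,a), Sum.inl (a,b), Sum.inl (b,a), Sum.inr b} := by
  ext x
  simp only [Den6, D6, Dex6, Finset.mem_sdiff, Finset.mem_insert, Finset.mem_singleton]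
  rcases x with ⟨p,q⟩ | c
  · simp
  · simp [hab, Ne.symm hab]
    constructor
    · tauto
    · rintro rfl; exact ⟨Or.inr rfl, Ne.symm hab⟩

lemma aux_card (a b : C) (hab : a ≠ b) : (Den6 C a b).card = 4 := by
  rw [aux_den6 a b hab]
  rw [Finset.card_insert_of_notMem (by simp [hab]),
      Finset.card_insert_of_notMem (by simp [hab]),
      Finset.card_insert_of_notMem (by simp)]
  simp

lemma aux_ce1' (a b : C) (hab : a ≠ b) :
    ceScore (Q2 C) (Den6 C a b) (Dex6 C a) (Sum.inl (a, a)) = 3 / 8 := by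
  have he : (Den6 C a b).erase (Sum.inl (a,a)) =
      {Sum.inl (a,b), Sum.inl (b,a), Sum.inr b} := by
    rw [aux_den6 a b hab, Finset.erase_insert (by simp [hab])]
  have hone : ∀ S : Finset ((C×C)⊕C),
      Q2 C (S ∪ Dex6 C a ∪ {Sum.inl (a,a)}) = 1 := by
    intro S; simp only [Q2, Dex6]
    exact if_pos ⟨a, a, by simp, by simp⟩
  have h0 : Q2 C ((∅ : Finset ((C×C)⊕C)) ∪ Dex6 C a) = 0 := by
    simp [Q2, Dex6]
  have h1 : Q2 C ({Sum.inr b} ∪ Dex6 C a) = 0 := by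
    simp [Q2, Dex6]
  have h2 : Q2 C ({Sum.inl (b,a)} ∪ Dex6 C a) = 0 := by
    simp [Q2, Dex6, hab, Ne.symm hab]
  have h3 : Q2 C ({Sum.inl (b,a), Sum.inr b} ∪ Dex6 C a) = 1 := by
    simp only [Q2, Dex6]; exact if_pos ⟨b, a, by simp, by simp⟩
  have h4 : Q2 C ({Sum.inl (a,b)} ∪ Dex6 C a) = 1 := by
    simp only [Q2, Dex6]; exact if_pos ⟨a, b, by simp, by simp⟩
  have h5 : Q2 C ({Sum.inl (a,b), Sum.inr b} ∪ Dex6 C a) = 1 := by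
    simp only [Q2, Dex6]; exact if_pos ⟨a, b, by simp, by simp⟩
  have h6 : Q2 C ({Sum.inl (a,b), Sum.inl (b,a)} ∪ Dex6 C a) = 1 := by
    simp only [Q2, Dex6]
    exact if_pos ⟨a, b, by simp, by simp⟩
  have h7 : Q2 C ({Sum.inl (a,b), Sum.inl (b,a), Sum.inr b} ∪ Dex6 C a) = 1 := by
    simp only [Q2, Dex6]; exact if_pos ⟨a, b, by simp, by simp⟩
  rw [ceScore, he, aux_card a b hab,
    aux_ps3 (by simp [hab]) (by simp) (by simp) _]
  simp only [hone, h0, h1, h2, h3, h4, h5, h6, h7]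
  norm_num

lemma aux_erase2 (a b : C) (hab : a ≠ b) :
    (Den6 C a b).erase (Sum.inl (b,a)) =
      {Sum.inl (a,a), Sum.inl (a,b), Sum.inr b} := by
  ext x
  simp only [aux_den6 a b hab, Finset.mem_erase, Finset.mem_insert, Finset.mem_singleton]
  constructor
  · rintro ⟨hne, h | h | h | h⟩ <;> tauto
  · rintro (rfl | rfl | rfl) <;> simp [hab, Ne.symm hab]

lemma aux_ce2 (a b : C) (hab : a ≠ b) :
    ceScore (Q2 C) (Den6 C a b) (Dex6 C a) (Sum.inl (b, a)) = 1 / 8 := by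
  have k0 : Q2 C ((∅ : Finset ((C×C)⊕C)) ∪ Dex6 C a ∪ {Sum.inl (b,a)}) = 0 := by
    simp [Q2, Dex6, hab, Ne.symm hab]
  have k1 : Q2 C ({Sum.inr b} ∪ Dex6 C a ∪ {Sum.inl (b,a)}) = 1 := by
    simp only [Q2, Dex6]; exact if_pos ⟨b, a, by simp, by simp⟩
  have k2 : Q2 C ({Sum.inl (a,b)} ∪ Dex6 C a ∪ {Sum.inl (b,a)}) = 1 := by
    simp only [Q2, Dex6]; exact if_pos ⟨a, b, by simp, by simp⟩
  have k3 : Q2 C ({Sum.inl (a,b), Sum.inr b} ∪ Dex6 C a ∪ {Sum.inl (b,a)}) = 1 := by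
    simp only [Q2, Dex6]; exact if_pos ⟨a, b, by simp, by simp⟩
  have k4 : Q2 C ({Sum.inl (a,a)} ∪ Dex6 C a ∪ {Sum.inl (b,a)}) = 1 := by
    simp only [Q2, Dex6]; exact if_pos ⟨a, a, by simp, by simp⟩
  have k5 : Q2 C ({Sum.inl (a,a), Sum.inr b} ∪ Dex6 C a ∪ {Sum.inl (b,a)}) = 1 := by
    simp only [Q2, Dex6]; exact if_pos ⟨a, a, by simp, by simp⟩
  have k6 : Q2 C ({Sum.inl (a,a), Sum.inl (a,b)} ∪ Dex6 C a ∪ {Sum.inl (b,a)}) = 1 := by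
    simp only [Q2, Dex6]; exact if_pos ⟨a, a, by simp, by simp⟩
  have k7 : Q2 C ({Sum.inl (a,a), Sum.inl (a,b), Sum.inr b} ∪ Dex6 C a ∪ {Sum.inl (b,a)}) = 1 := by
    simp only [Q2, Dex6]; exact if_pos ⟨a, a, by simp, by simp⟩
  have m0 : Q2 C ((∅ : Finset ((C×C)⊕C)) ∪ Dex6 C a) = 0 := by simp [Q2, Dex6]
  have m1 : Q2 C ({Sum.inr b} ∪ Dex6 C a) = 0 := by simp [Q2, Dex6]
  have m2 : Q2 C ({Sum.inl (a,b)} ∪ Dex6 C a) = 1 := by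
    simp only [Q2, Dex6]; exact if_pos ⟨a, b, by simp, by simp⟩
  have m3 : Q2 C ({Sum.inl (a,b), Sum.inr b} ∪ Dex6 C a) = 1 := by
    simp only [Q2, Dex6]; exact if_pos ⟨a, b, by simp, by simp⟩
  have m4 : Q2 C ({Sum.inl (a,a)} ∪ Dex6 C a) = 1 := by
    simp only [Q2, Dex6]; exact if_pos ⟨a, a, by simp, by simp⟩
  have m5 : Q2 C ({Sum.inl (a,a), Sum.inr b} ∪ Dex6 C a) = 1 := by
    simp only [Q2, Dex6]; exact if_pos ⟨a, a, by simp, by simp⟩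
  have m6 : Q2 C ({Sum.inl (a,a), Sum.inl (a,b)} ∪ Dex6 C a) = 1 := by
    simp only [Q2, Dex6]; exact if_pos ⟨a, a, by simp, by simp⟩
  have m7 : Q2 C ({Sum.inl (a,a), Sum.inl (a,b), Sum.inr b} ∪ Dex6 C a) = 1 := by
    simp only [Q2, Dex6]; exact if_pos ⟨a, a, by simp, by simp⟩
  rw [ceScore, aux_erase2 a b hab, aux_card a b hab,
    aux_ps3 (by simp [hab]) (by simp) (by simp) _]
  simp only [k0, k1, k2, k3, k4, k5, k6, k7, m0, m1, m2, m3, m4, m5, m6, m7]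
  norm_num

lemma aux_resp2 (a b : C) (hab : a ≠ b) :
    (1:ℝ)/3 ≤ respScore (Q2 C) (D6 C a b) (Den6 C a b) (Sum.inl (b, a)) := by
  set τ : (C×C)⊕C := Sum.inl (b,a) with hτ
  have hsub : ({Sum.inl (a,a), Sum.inl (a,b)} : Finset ((C×C)⊕C)) ⊆ (Den6 C a b).erase τ := by
    rw [aux_erase2 a b hab]
    intro x hx
    simp only [Finset.mem_insert, Finset.mem_singleton] at hx ⊢
    tauto
  have hq1 : Q2 C (D6 C a b \ {Sum.inl (a,a), Sum.inl (a,b)}) = 1 := by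
    simp only [Q2]
    rw [if_pos ⟨b, a, by simp [D6, hab, Ne.symm hab], by simp [D6]⟩]
  have hq0 : Q2 C (D6 C a b \ insert τ {Sum.inl (a,a), Sum.inl (a,b)}) = 0 := by
    simp only [Q2]
    rw [if_neg]
    rintro ⟨x, y, hx, -⟩
    rw [Finset.mem_sdiff] at hx
    obtain ⟨hx1, hx2⟩ := hx
    simp only [D6, Finset.mem_insert, Finset.mem_singleton, hτ] at hx1 hx2
    tauto
  have hcond : ∃ Γ ⊆ (Den6 C a b).erase τ,
      Q2 C (D6 C a b \ Γ) = 1 ∧ Q2 C (D6 C a b \ insert τ Γ) = 0 :=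
    ⟨_, hsub, hq1, hq0⟩
  have hcard : ({Sum.inl (a,a), Sum.inl (a,b)} : Finset ((C×C)⊕C)).card = 2 := by
    rw [Finset.card_insert_of_notMem (by simp [hab])]; simp
  have hm : sInf {n : ℕ | ∃ Γ ⊆ (Den6 C a b).erase τ,
      Γ.card = n ∧ Q2 C (D6 C a b \ Γ) = 1 ∧ Q2 C (D6 C a b \ insert τ Γ) = 0} ≤ 2 :=
    Nat.sInf_le ⟨_, hsub, hcard, hq1, hq0⟩
  rw [respScore, if_pos hcond]
  rw [div_le_div_iff₀ (by norm_num) (by positivity)]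
  have : ((sInf {n : ℕ | ∃ Γ ⊆ (Den6 C a b).erase τ,
      Γ.card = n ∧ Q2 C (D6 C a b \ Γ) = 1 ∧ Q2 C (D6 C a b \ insert τ Γ) = 0} : ℕ) : ℝ) ≤ 2 := by
    exact_mod_cast hm
  linarith

lemma aux_resp1 (a b : C) (hab : a ≠ b) :
    respScore (Q2 C) (D6 C a b) (Den6 C a b) (Sum.inl (a, a)) ≤ (1:ℝ)/3 := by
  set τ : (C×C)⊕C := Sum.inl (a,a) with hτ
  rw [respScore]
  split_ifs with hcond
  · have hlow : 2 ≤ sInf {n : ℕ | ∃ Γ ⊆ (Den6 C a b).erase τ,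
        Γ.card = n ∧ Q2 C (D6 C a b \ Γ) = 1 ∧ Q2 C (D6 C a b \ insert τ Γ) = 0} := by
      refine le_csInf ?_ ?_
      · obtain ⟨Γ, h1, h2, h3⟩ := hcond
        exact ⟨Γ.card, Γ, h1, rfl, h2, h3⟩
      · rintro n ⟨Γ, hΓsub, rfl, -, hq0⟩
        by_contra hn
        push_neg at hn
        interval_cases h : Γ.card
        all_goals {
          have hΓsub' : Γ ⊆ ({Sum.inl (a,b), Sum.inl (b,a), Sum.inr b} : Finset _) := by
            rwa [show (Den6 C a b).erase τ = {Sum.inl (a,b), Sum.inl (b,a), Sum.inr b} by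
              rw [hτ, aux_den6 a b hab, Finset.erase_insert (by simp [hab])]] at hΓsub
          have hcard1 : Γ.card ≤ 1 := by omega
          have key : Q2 C (D6 C a b \ insert τ Γ) = 1 := by
            by_cases ht2 : Sum.inl (a,b) ∈ Γ
            · have hΓeq : Γ = {Sum.inl (a,b)} := by
                apply Finset.eq_singleton_iff_unique_mem.mpr
                exact ⟨ht2, fun x hx => Finset.card_le_one.mp hcard1 x hx _ ht2⟩
              have mem1 : Sum.inl (b,a) ∈ D6 C a b \ insert τ Γ := by
                rw [Finset.mem_sdiff]
                refine ⟨by simp [D6], ?_⟩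
                simp [hΓeq, hτ, hab, Ne.symm hab]
              have mem2 : (Sum.inr b : (C×C)⊕C) ∈ D6 C a b \ insert τ Γ := by
                rw [Finset.mem_sdiff]
                refine ⟨by simp [D6], ?_⟩
                simp [hΓeq, hτ]
              simp only [Q2]
              rw [if_pos ⟨b, a, mem1, mem2⟩]
            · have mem1 : Sum.inl (a,b) ∈ D6 C a b \ insert τ Γ := by
                rw [Finset.mem_sdiff]
                refine ⟨by simp [D6], ?_⟩
                simp only [Finset.mem_insert, hτ]
                push_neg
                exact ⟨by simp [hab, Ne.symm hab], ht2⟩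
              have mem2 : (Sum.inr a : (C×C)⊕C) ∈ D6 C a b \ insert τ Γ := by
                rw [Finset.mem_sdiff]
                refine ⟨by simp [D6], ?_⟩
                simp only [Finset.mem_insert, hτ]
                push_neg
                refine ⟨by simp, fun hin => ?_⟩
                have := hΓsub' hin
                simp [hab, Ne.symm hab] at this
              simp only [Q2]
              rw [if_pos ⟨a, b, mem1, mem2⟩]
          omega
        }
    have : (2:ℝ) ≤ ((sInf {n : ℕ | ∃ Γ ⊆ (Den6 C a b).erase τ,
        Γ.card = n ∧ Q2 C (D6 C a b \ Γ) = 1 ∧ Q2 C (D6 C a b \ insert τ Γ) = 0} : ℕ) : ℝ) := by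
      exact_mod_cast hlow
    rw [div_le_div_iff₀ (by linarith) (by norm_num)]
    linarith
  · norm_num

variable (C)

/-- For `Q₂ : ∃x∃y (R(x,y) ∧ S(x))` there is an instance with a nonempty exogenous part
on which CE and responsibility are not aligned; concretely on `D₆`:
`CE(R(a,a)) = 3/8 > 1/8 = CE(R(b,a))` while `ρ(R(a,a)) ≤ ρ(R(b,a))`. -/
theorem stmt6 [Countable C] [Infinite C] (a b : C) (hab : a ≠ b) :
    Dex6 C a ≠ ∅ ∧
    ceScore (Q2 C) (Den6 C a b) (Dex6 C a) (Sum.inl (a, a)) = 3 / 8 ∧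
    ceScore (Q2 C) (Den6 C a b) (Dex6 C a) (Sum.inl (b, a)) = 1 / 8 ∧
    (3 : ℝ) / 8 > 1 / 8 ∧
    respScore (Q2 C) (D6 C a b) (Den6 C a b) (Sum.inl (a, a)) ≤
      respScore (Q2 C) (D6 C a b) (Den6 C a b) (Sum.inl (b, a)) ∧
    ¬ scoresAligned (ceScore (Q2 C) (Den6 C a b) (Dex6 C a))
        (respScore (Q2 C) (D6 C a b) (Den6 C a b)) (Den6 C a b) := by
  refine ⟨by simp [Dex6], aux_ce1' a b hab, aux_ce2 a b hab, by norm_num,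
    le_trans (aux_resp1 a b hab) (aux_resp2 a b hab), ?_⟩
  intro h
  unfold scoresAligned at h
  have m1 : (Sum.inl (a,a) : (C×C)⊕C) ∈ Den6 C a b := by
    rw [aux_den6 a b hab]; simp
  have m2 : (Sum.inl (b,a) : (C×C)⊕C) ∈ Den6 C a b := by
    rw [aux_den6 a b hab]; simp
  have hce := (h _ m1 _ m2).mpr (le_trans (aux_resp1 a b hab) (aux_resp2 a b hab))
  rw [aux_ce1' a b hab, aux_ce2 a b hab] at hce
  norm_num at hce

end
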